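/- For all l, m, n ∈ ℤ, in A: [L_{1/2,l}^{(−1)^l}, L_{1/2,m}^{(−1)^m}, L_{1/2,n}^{(−1)^n}] = (1/2) · D · L_{1/2, l+m+n−1}^{(−1)^{l+m+n−1}}, where D is the determinant of the 3×3 matrix with rows ((−1)^l, (−1)^m, (−1)^n), (1, 1, 1), (l, m, n). (In particular, whenever the superscript (−1)^l + (−1)^m + (−1)^n produced by the bracket differs from (−1)^{l+m+n−1}, the determinant D vanishes.) Hence the simple 3-Lie algebra A_ω, with basis {U_n : n ∈ ℤ} and bracket [U_l, U_m, U_n] = D·U_{l+m+n−1}, embeds into (A, [·,·,·]) via U_r ↦ √2 · L_{1/2,r}^{(−1)^r} when F contains √2. -/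

import Mathlib

noncomputable section

/-- The half-integers `½ℤ = {k/2 : k ∈ ℤ}` as an additive subgroup of `ℚ`. -/
def HalfInt : AddSubgroup ℚ where
  carrier := {q | ∃ k : ℤ, q = k / 2}
  add_mem' := by rintro a b ⟨k, rfl⟩ ⟨j, rfl⟩; exact ⟨k + j, by push_cast; ring⟩
  zero_mem' := ⟨0, by norm_num⟩
  neg_mem' := by rintro a ⟨k, rfl⟩; exact ⟨-k, by push_cast; ring⟩

/-- The half-integer `k/2`. -/
def hh (k : ℤ) : HalfInt := ⟨(k : ℚ) / 2, ⟨k, rfl⟩⟩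

variable (F : Type*) [Field F] [CharZero F]

/-- `A` is the group algebra of `(½ℤ)³` over `F`; the basis element indexed by
`(l, m, r)` is `L_{l,m}^r`. -/
abbrev A := AddMonoidAlgebra F (HalfInt × HalfInt × HalfInt)

/-- The basis element `L_{l,m}^r` of `A`. -/
def L (l m r : HalfInt) : A F := AddMonoidAlgebra.single (l, m, r) 1

/-- `M(α₁,α₂,α₃)`: the determinant of the 3×3 matrix with rows `(r₁,r₂,r₃)`,
`(l₁,l₂,l₃)`, `(m₁,m₂,m₃)`, computed in `ℚ` and mapped into `F`.
Here an index `α = (l, m, r)`. -/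
def Mdet (α β γ : HalfInt × HalfInt × HalfInt) : F :=
  ((Matrix.det !![(α.2.2 : ℚ), (β.2.2 : ℚ), (γ.2.2 : ℚ);
                  (α.1 : ℚ),   (β.1 : ℚ),   (γ.1 : ℚ);
                  (α.2.1 : ℚ), (β.2.1 : ℚ), (γ.2.1 : ℚ)] : ℚ) : F)

/-- The shift `ν = (1, 1, 0)` (in coordinates `(l, m, r)`). -/
def nu : HalfInt × HalfInt × HalfInt := (hh 2, hh 2, hh 0)

/-- The alternating trilinear bracket on `A`, determined on basis elements by
`[L_{l₁,m₁}^{r₁}, L_{l₂,m₂}^{r₂}, L_{l₃,m₃}^{r₃}]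
  = M(α₁,α₂,α₃) · L_{l₁+l₂+l₃-1, m₁+m₂+m₃-1}^{r₁+r₂+r₃}`. -/
def bracket (x y z : A F) : A F :=
  Finsupp.sum x.coeff fun α a => Finsupp.sum y.coeff fun β b => Finsupp.sum z.coeff fun γ c =>
    AddMonoidAlgebra.single (α + β + γ - nu) (a * b * c * Mdet F α β γ)

set_option linter.unusedSectionVars false

/-- Coercion of `hh k` to `ℚ`. -/
lemma hh_coe (k : ℤ) : ((hh k : HalfInt) : ℚ) = k / 2 := rfl

lemma hh_add (a b : ℤ) : hh a + hh b = hh (a + b) := by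
  apply Subtype.ext
  push_cast [hh_coe]
  ring

lemma hh_sub (a b : ℤ) : hh a - hh b = hh (a - b) := by
  apply Subtype.ext
  push_cast [hh_coe]
  ring

lemma hh_congr {a b : ℤ} (h : a = b) : hh a = hh b := by rw [h]

lemma single_eq_single_iff' {G : Type*} (a₁ a₂ : G) (b₁ b₂ : F) :
    (AddMonoidAlgebra.single a₁ b₁ : AddMonoidAlgebra F G) = AddMonoidAlgebra.single a₂ b₂ ↔
      a₁ = a₂ ∧ b₁ = b₂ ∨ b₁ = 0 ∧ b₂ = 0 :=
  AddMonoidAlgebra.single_inj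

/-- The bracket on basis multiples. -/
lemma bracket_single (α β γ : HalfInt × HalfInt × HalfInt) (a b c : F) :
    bracket F (AddMonoidAlgebra.single α a) (AddMonoidAlgebra.single β b)
        (AddMonoidAlgebra.single γ c)
      = AddMonoidAlgebra.single (α + β + γ - nu) (a * b * c * Mdet F α β γ) := by
  simp [bracket, AddMonoidAlgebra.coeff_single, Finsupp.sum_single_index]

/-- Evaluation of `Mdet` on the indices occurring in the embedding. -/
lemma Mdet_eval (el em en l m n : ℤ) :
    Mdet F (hh 1, hh (2*l), hh (2*el)) (hh 1, hh (2*m), hh (2*em))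
        (hh 1, hh (2*n), hh (2*en))
      = (1/2 : F) * Matrix.det !![(el : F), (em : F), (en : F); 1, 1, 1;
          (l : F), (m : F), (n : F)] := by
  norm_num [Mdet, hh_coe, Matrix.det_fin_three, Matrix.cons_val_two, Matrix.vecHead, Matrix.vecTail]
  ring

/-- The core computation, with the values of the relevant `negOnePow`s abstracted. -/
lemma h1core (l m n el em en e : ℤ)
    (hl : ((l.negOnePow : ℤ)) = el) (hm : ((m.negOnePow : ℤ)) = em)
    (hn : ((n.negOnePow : ℤ)) = en) (he : (((l + m + n - 1).negOnePow : ℤ)) = e)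
    (hcase : el + em + en = e ∨ (el = em ∧ em = en)) :
    bracket F (L F (hh 1) (hh (2 * l)) (hh (2 * (l.negOnePow : ℤ))))
              (L F (hh 1) (hh (2 * m)) (hh (2 * (m.negOnePow : ℤ))))
              (L F (hh 1) (hh (2 * n)) (hh (2 * (n.negOnePow : ℤ))))
      = ((1 / 2 : F) *
            Matrix.det !![(((l.negOnePow : ℤ)) : F), (((m.negOnePow : ℤ)) : F),
                            (((n.negOnePow : ℤ)) : F);
                          1, 1, 1;
                          (l : F), (m : F), (n : F)]) •
          L F (hh 1) (hh (2 * (l + m + n - 1)))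
            (hh (2 * (((l + m + n - 1).negOnePow : ℤ)))) := by
  simp only [L, hl, hm, hn, he, bracket_single, AddMonoidAlgebra.smul_single', mul_one, one_mul]
  rw [single_eq_single_iff']
  rcases hcase with h | ⟨h1, h2⟩
  · left
    refine ⟨?_, ?_⟩
    · simp only [nu, Prod.mk_add_mk, Prod.mk_sub_mk, hh_add, hh_sub, Prod.mk.injEq]
      exact ⟨hh_congr (by ring), hh_congr (by ring), hh_congr (by omega)⟩
    · exact Mdet_eval F el em en l m n
  · right
    subst h1
    subst h2
    refine ⟨?_, ?_⟩
    · rw [Mdet_eval]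
      norm_num [Matrix.det_fin_three, Matrix.cons_val_two, Matrix.vecHead, Matrix.vecTail]
      try ring
    · norm_num [Matrix.det_fin_three, Matrix.cons_val_two, Matrix.vecHead, Matrix.vecTail]
      try ring

/-- for all `l, m, n ∈ ℤ`,
`[L_{1/2,l}^{(−1)^l}, L_{1/2,m}^{(−1)^m}, L_{1/2,n}^{(−1)^n}]
  = (1/2)·D·L_{1/2, l+m+n−1}^{(−1)^{l+m+n−1}}`, where `D` is the determinant of the
matrix with rows `((−1)^l, (−1)^m, (−1)^n)`, `(1,1,1)`, `(l,m,n)`.  Hence the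
simple 3-Lie algebra `A_ω` embeds into `(A, [·,·,·])` via `U_r ↦ √2·L_{1/2,r}^{(−1)^r}`
when `F` contains `√2`. -/
theorem Aomega_embeds (l m n : ℤ) :
    bracket F (L F (hh 1) (hh (2 * l)) (hh (2 * (l.negOnePow : ℤ))))
              (L F (hh 1) (hh (2 * m)) (hh (2 * (m.negOnePow : ℤ))))
              (L F (hh 1) (hh (2 * n)) (hh (2 * (n.negOnePow : ℤ))))
      = ((1 / 2 : F) *
            Matrix.det !![(((l.negOnePow : ℤ)) : F), (((m.negOnePow : ℤ)) : F),
                            (((n.negOnePow : ℤ)) : F);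
                          1, 1, 1;
                          (l : F), (m : F), (n : F)]) •
          L F (hh 1) (hh (2 * (l + m + n - 1)))
            (hh (2 * (((l + m + n - 1).negOnePow : ℤ))))
      ∧ ∀ s : F, s * s = 2 →
          bracket F (s • L F (hh 1) (hh (2 * l)) (hh (2 * (l.negOnePow : ℤ))))
                    (s • L F (hh 1) (hh (2 * m)) (hh (2 * (m.negOnePow : ℤ))))
                    (s • L F (hh 1) (hh (2 * n)) (hh (2 * (n.negOnePow : ℤ))))
            = (Matrix.det !![(((l.negOnePow : ℤ)) : F), (((m.negOnePow : ℤ)) : F),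
                               (((n.negOnePow : ℤ)) : F);
                             1, 1, 1;
                             (l : F), (m : F), (n : F)]) •
                (s • L F (hh 1) (hh (2 * (l + m + n - 1)))
                  (hh (2 * (((l + m + n - 1).negOnePow : ℤ))))) := by
  have key : ∀ k : ℤ, ((k.negOnePow : ℤ)) = if k % 2 = 0 then 1 else -1 := by
    intro k
    rcases Int.even_or_odd k with h | h
    · simp [Int.negOnePow_even _ h, Int.even_iff.mp h]
    · simp [Int.negOnePow_odd _ h, Int.odd_iff.mp h]
  have h1 : bracket F (L F (hh 1) (hh (2 * l)) (hh (2 * (l.negOnePow : ℤ))))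
              (L F (hh 1) (hh (2 * m)) (hh (2 * (m.negOnePow : ℤ))))
              (L F (hh 1) (hh (2 * n)) (hh (2 * (n.negOnePow : ℤ))))
      = ((1 / 2 : F) *
            Matrix.det !![(((l.negOnePow : ℤ)) : F), (((m.negOnePow : ℤ)) : F),
                            (((n.negOnePow : ℤ)) : F);
                          1, 1, 1;
                          (l : F), (m : F), (n : F)]) •
          L F (hh 1) (hh (2 * (l + m + n - 1)))
            (hh (2 * (((l + m + n - 1).negOnePow : ℤ)))) := by
    refine h1core F l m n _ _ _ _ (key l) (key m) (key n) (key (l + m + n - 1)) ?_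
    rcases Int.emod_two_eq l with Hl | Hl <;> rcases Int.emod_two_eq m with Hm | Hm <;>
      rcases Int.emod_two_eq n with Hn | Hn <;>
      simp only [Hl, Hm, Hn] <;>
      first
        | (left; rw [if_pos (show (l + m + n - 1) % 2 = 0 by omega)]; norm_num; done)
        | (left; rw [if_neg (show ¬ (l + m + n - 1) % 2 = 0 by omega)]; norm_num; done)
        | (right; norm_num)
  refine ⟨h1, fun s hs => ?_⟩
  simp only [L, AddMonoidAlgebra.smul_single', mul_one] at h1 ⊢
  rw [bracket_single] at h1 ⊢
  rw [one_mul, one_mul, one_mul] at h1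
  rw [show (s * s * s * Mdet F (hh 1, hh (2*l), hh (2*(l.negOnePow : ℤ)))
        (hh 1, hh (2*m), hh (2*(m.negOnePow : ℤ)))
        (hh 1, hh (2*n), hh (2*(n.negOnePow : ℤ)))) = (s*s*s) * (Mdet F _ _ _) from by ring]
  rw [← AddMonoidAlgebra.smul_single', h1, AddMonoidAlgebra.smul_single']
  congr 1
  linear_combination ((1/2 : F) *
    Matrix.det !![(((l.negOnePow : ℤ)) : F), (((m.negOnePow : ℤ)) : F),
                    (((n.negOnePow : ℤ)) : F);
                  1, 1, 1;
                  (l : F), (m : F), (n : F)] * s) * hs
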